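/- Let ψ : [1,∞) → ℝ be positive, convex, differentiable with ψ'(t) < 0 for all t ≥ 1, and ψ(t) → 0 as t → ∞; set λ(t) = ψ(t)/|ψ'(t)| and α(t) = ψ(t)/(t·|ψ'(t)|). Assume α is nonincreasing with α(t) → 0 as t → ∞ and λ is nondecreasing with λ(t) → ∞ as t → ∞. Then lim_{n→∞} [ (1/n)·Σ_{k=1}^∞ k·ψ(k+n) ] / [ Σ_{k=n}^∞ ψ(k) ] = 0. -/

import Mathlib

open MeasureTheory Real Filter

set_option maxHeartbeats 2000000 in
theorem limit_ratio_zero (ψ ψ' : ℝ → ℝ)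
    (hpos : ∀ t, 1 ≤ t → 0 < ψ t)
    (hconv : ConvexOn ℝ (Set.Ici (1 : ℝ)) ψ)
    (hderiv : ∀ t, 1 ≤ t → HasDerivAt ψ (ψ' t) t)
    (hneg : ∀ t, 1 ≤ t → ψ' t < 0)
    (hlim : Filter.Tendsto ψ Filter.atTop (nhds 0))
    (halp_anti : ∀ s t, 1 ≤ s → s ≤ t → ψ t / (t * |ψ' t|) ≤ ψ s / (s * |ψ' s|))
    (halp_lim : Filter.Tendsto (fun t => ψ t / (t * |ψ' t|)) Filter.atTop (nhds 0))
    (hlam_mono : ∀ s t, 1 ≤ s → s ≤ t → ψ s / |ψ' s| ≤ ψ t / |ψ' t|)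
    (hlam_lim : Filter.Tendsto (fun t => ψ t / |ψ' t|) Filter.atTop Filter.atTop) :
    Filter.Tendsto
      (fun n : ℕ =>
        ((1 / (n : ℝ)) * ∑' k : ℕ, ((k : ℝ) + 1) * ψ ((k + 1 + n : ℕ) : ℝ)) /
          (∑' k : ℕ, ψ ((k + n : ℕ) : ℝ)))
      Filter.atTop (nhds 0) := by
  -- basic pointwise facts
  have habs : ∀ t, 1 ≤ t → |ψ' t| = -ψ' t := fun t ht => abs_of_neg (hneg t ht)
  have hψ'pos : ∀ t, 1 ≤ t → 0 < -ψ' t := fun t ht => neg_pos.2 (hneg t ht)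
  have hψcont : ContinuousOn ψ (Set.Ici 1) :=
    fun t ht => ((hderiv t ht).continuousAt).continuousWithinAt
  -- antitone
  have hanti : ∀ s t, 1 ≤ s → s ≤ t → ψ t ≤ ψ s := by
    have h : AntitoneOn ψ (Set.Ici 1) := by
      apply antitoneOn_of_deriv_nonpos (convex_Ici 1) hψcont
      · intro x hx
        rw [interior_Ici] at hx
        exact ((hderiv x hx.le).differentiableAt.differentiableWithinAt)
      · intro x hx
        rw [interior_Ici] at hx
        rw [(hderiv x hx.le).deriv]
        exact (hneg x hx.le).le
    exact fun s t hs hst => h hs (le_trans hs hst) hst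
  -- choose T₀
  obtain ⟨T₁, hT₁⟩ := eventually_atTop.1
    ((halp_lim.eventually (eventually_le_nhds (by norm_num : (0:ℝ) < 1/8))).and
      (hlam_lim.eventually_ge_atTop 1))
  set T₀ : ℝ := max T₁ 1 with hT₀def
  have hT₀1 : (1:ℝ) ≤ T₀ := le_max_right _ _
  have hα8 : ∀ t, T₀ ≤ t → ψ t / (t * |ψ' t|) ≤ 1/8 :=
    fun t ht => (hT₁ t (le_trans (le_max_left _ _) ht)).1
  have hlam1 : ∀ t, T₀ ≤ t → 1 ≤ ψ t / |ψ' t| :=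
    fun t ht => (hT₁ t (le_trans (le_max_left _ _) ht)).2
  have hT₀t1 : ∀ t : ℝ, T₀ ≤ t → 1 ≤ t := fun t ht => le_trans hT₀1 ht
  -- from hlam1 : -ψ' t ≤ ψ t
  have hψ'le : ∀ t, T₀ ≤ t → -ψ' t ≤ ψ t := by
    intro t ht
    have h1 := hlam1 t ht
    rw [habs t (hT₀t1 t ht)] at h1
    have := (le_div_iff₀ (hψ'pos t (hT₀t1 t ht))).1 h1
    linarith
  -- from hα8 : 8 ψ t ≤ t * (-ψ' t)
  have h8ψ : ∀ t, T₀ ≤ t → 8 * ψ t ≤ t * (-ψ' t) := by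
    intro t ht
    have ht1 := hT₀t1 t ht
    have h1 := hα8 t ht
    rw [habs t ht1] at h1
    have hd : 0 < t * (-ψ' t) := mul_pos (lt_of_lt_of_le one_pos ht1) (hψ'pos t ht1)
    have := (div_le_iff₀ hd).1 h1
    linarith
  -- decay : t^4 * ψ t ≤ C for t ≥ T₀
  set C : ℝ := T₀^4 * ψ T₀ with hCdef
  have hC : 0 < C := mul_pos (pow_pos (lt_of_lt_of_le one_pos hT₀1) 4) (hpos T₀ hT₀1)
  have hdecay : ∀ t, T₀ ≤ t → t^4 * ψ t ≤ C := by
    have hg : AntitoneOn (fun t => t^4 * ψ t) (Set.Ici T₀) := by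
      apply antitoneOn_of_deriv_nonpos (convex_Ici T₀)
      · exact (continuousOn_pow 4).mul (hψcont.mono (fun x hx => le_trans hT₀1 hx))
      · intro x hx
        rw [interior_Ici] at hx
        exact (((hasDerivAt_pow 4 x).mul (hderiv x (le_trans hT₀1 hx.le))).differentiableAt).differentiableWithinAt
      · intro x hx
        rw [interior_Ici] at hx
        have hx1 : 1 ≤ x := le_trans hT₀1 hx.le
        rw [show deriv (fun t => t ^ 4 * ψ t) x = _ from ((hasDerivAt_pow 4 x).mul (hderiv x hx1)).deriv]
        have h8 := h8ψ x hx.le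
        have hψx := (hpos x hx1).le
        have hx0 : 0 < x := lt_of_lt_of_le one_pos hx1
        have hx3 : (0:ℝ) ≤ x^3 := by positivity
        have hxd : x * ψ' x ≤ -(8 * ψ x) := by linarith
        push_cast
        norm_num
        nlinarith [mul_le_mul_of_nonneg_left hxd hx3, mul_nonneg hx3 hψx]
    intro t ht
    have := hg (Set.self_mem_Ici) ht ht
    simpa [hCdef] using this
  -- key multiplicative bound
  have hmul : ∀ t, T₀ ≤ t → ∀ B : ℝ, 0 ≤ B → B ≤ t^2 → B * ψ t ≤ C / t^2 := by
    intro t ht B hB0 hBt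
    have ht1 : 1 ≤ t := hT₀t1 t ht
    have hψt := (hpos t ht1).le
    rw [le_div_iff₀ (by positivity : (0:ℝ) < t^2)]
    calc B * ψ t * t^2 ≤ t^2 * ψ t * t^2 :=
          mul_le_mul_of_nonneg_right (mul_le_mul_of_nonneg_right hBt hψt) (sq_nonneg t)
      _ = t^4 * ψ t := by ring
      _ ≤ C := hdecay t ht
  -- master integrability lemma
  have hInt : ∀ (f : ℝ → ℝ) (s K : ℝ), T₀ ≤ s →
      AEStronglyMeasurable f (volume.restrict (Set.Ioi s)) →
      (∀ t ∈ Set.Ioi s, ‖f t‖ ≤ K / t^2) → IntegrableOn f (Set.Ioi s) := by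
    intro f s K hs hm hb
    have hs0 : 0 < s := lt_of_lt_of_le one_pos (hT₀t1 s hs)
    have hint : IntegrableOn (fun t : ℝ => K * t ^ (-2:ℝ)) (Set.Ioi s) :=
      (integrableOn_Ioi_rpow_of_lt (by norm_num) hs0).const_mul K
    apply Integrable.mono' hint hm
    rw [ae_restrict_iff' measurableSet_Ioi]
    apply ae_of_all
    intro t ht
    have ht0 : 0 < t := lt_trans hs0 ht
    have heq : K * t ^ (-2:ℝ) = K / t^2 := by
      rw [show (-2:ℝ) = -((2:ℕ):ℝ) by norm_num, Real.rpow_neg ht0.le, Real.rpow_natCast]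
      ring
    rw [heq]
    exact hb t ht
  -- measurability
  have hψ'meas : ∀ s : ℝ, 1 ≤ s → AEStronglyMeasurable ψ' (volume.restrict (Set.Ioi s)) := by
    intro s hs
    apply (measurable_deriv ψ).aestronglyMeasurable.restrict.congr
    filter_upwards [ae_restrict_mem measurableSet_Ioi] with t ht
    exact (hderiv t (le_trans hs ht.le)).deriv
  have hψmeas : ∀ s : ℝ, 1 ≤ s → AEStronglyMeasurable ψ (volume.restrict (Set.Ioi s)) := by
    intro s hs
    exact ((hψcont.mono (fun x hx => le_trans hs (le_of_lt hx))).aestronglyMeasurable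
      measurableSet_Ioi)
  -- ### main estimate for fixed n
  have key : ∀ n : ℕ, T₀ + 1 ≤ (n:ℝ) →
      (0 < (∑' k : ℕ, ψ ((k + n : ℕ) : ℝ)) ∧
      ((1 / (n : ℝ)) * ∑' k : ℕ, ((k : ℝ) + 1) * ψ ((k + 1 + n : ℕ) : ℝ)) ≤
        (2 * (ψ (n:ℝ) / ((n:ℝ) * |ψ' (n:ℝ)|)) + 1/(n:ℝ)) * (∑' k : ℕ, ψ ((k + n : ℕ) : ℝ))) := by
    intro n hn
    set N : ℝ := (n:ℝ) with hNdef
    have hNT : T₀ ≤ N := by linarith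
    have hN1 : (1:ℝ) ≤ N := hT₀t1 N hNT
    have hN0 : (0:ℝ) < N := lt_of_lt_of_le one_pos hN1
    have hScast : ∀ k : ℕ, ((k + n : ℕ) : ℝ) = N + k := by intro k; push_cast; ring
    have hTcast : ∀ k : ℕ, ((k + 1 + n : ℕ) : ℝ) = N + k + 1 := by intro k; push_cast; ring
    -- integrability facts
    have Iψ : IntegrableOn ψ (Set.Ioi N) := by
      apply hInt ψ N C hNT (hψmeas N hN1)
      intro t ht
      have htT : T₀ ≤ t := le_trans hNT ht.le
      have ht1 : 1 ≤ t := hT₀t1 t htT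
      rw [Real.norm_eq_abs, abs_of_nonneg (hpos t ht1).le]
      simpa using hmul t htT 1 zero_le_one (by nlinarith)
    have I1 : IntegrableOn (fun t => (t - N) * ψ t) (Set.Ioi N) := by
      apply hInt _ N C hNT
      · exact (((continuous_id.sub continuous_const).aestronglyMeasurable).restrict).mul (hψmeas N hN1)
      intro t ht
      have htT : T₀ ≤ t := le_trans hNT ht.le
      have ht1 : 1 ≤ t := hT₀t1 t htT
      have htN : N ≤ t := ht.le
      rw [Real.norm_eq_abs, abs_of_nonneg (mul_nonneg (by linarith) (hpos t ht1).le)]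
      exact hmul t htT (t - N) (by linarith) (by nlinarith)
    have I2 : IntegrableOn (fun t => (t + 1 - N) * ψ t) (Set.Ioi N) := by
      apply hInt _ N C hNT
      · exact ((((continuous_id.add continuous_const).sub continuous_const).aestronglyMeasurable).restrict).mul (hψmeas N hN1)
      intro t ht
      have htT : T₀ ≤ t := le_trans hNT ht.le
      have ht1 : 1 ≤ t := hT₀t1 t htT
      have htN : N ≤ t := ht.le
      rw [Real.norm_eq_abs, abs_of_nonneg (mul_nonneg (by linarith) (hpos t ht1).le)]
      exact hmul t htT (t + 1 - N) (by linarith) (by nlinarith)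
    have I4 : IntegrableOn (fun t => (t - N) * t * (-ψ' t)) (Set.Ioi N) := by
      apply hInt _ N C hNT
      · exact ((((continuous_id.sub continuous_const).mul continuous_id).aestronglyMeasurable).restrict).mul (hψ'meas N hN1).neg
      intro t ht
      have htT : T₀ ≤ t := le_trans hNT ht.le
      have ht1 : 1 ≤ t := hT₀t1 t htT
      have htN : N ≤ t := ht.le
      have hf0 : (0:ℝ) ≤ (t - N) * t := mul_nonneg (by linarith) (by linarith)
      rw [Real.norm_eq_abs, abs_of_nonneg (mul_nonneg hf0 (hψ'pos t ht1).le)]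
      calc (t - N) * t * (-ψ' t) ≤ (t - N) * t * ψ t :=
            mul_le_mul_of_nonneg_left (hψ'le t htT) hf0
        _ = ((t - N) * t) * ψ t := by ring
        _ ≤ C / t^2 := hmul t htT ((t - N) * t) hf0 (by nlinarith)
    have I3 : IntegrableOn (fun t => (2*t - N) * ψ t) (Set.Ioi N) := by
      have h : IntegrableOn (fun t => 2 * ((t - N) * ψ t) + N * ψ t) (Set.Ioi N) :=
        (I1.const_mul 2).add (Iψ.const_mul N)
      exact IntegrableOn.congr_fun h (fun t ht => by ring) measurableSet_Ioi
    have I4' : IntegrableOn (fun t => (t - N) * t * ψ' t) (Set.Ioi N) :=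
      IntegrableOn.congr_fun I4.neg (fun t ht => by simp only [Pi.neg_apply]; ring) measurableSet_Ioi
    have Ih' : IntegrableOn (fun t => (2*t - N) * ψ t + (t - N) * t * ψ' t) (Set.Ioi N) :=
      I3.add I4'
    -- FTC / integration by parts
    have hFTC : ∫ t in Set.Ioi N, ((2*t - N) * ψ t + (t - N) * t * ψ' t) = 0 := by
      have h := integral_Ioi_of_hasDerivAt_of_tendsto (f := fun t => (t - N) * t * ψ t)
        (f' := fun t => (2*t - N) * ψ t + (t - N) * t * ψ' t) (a := N) (m := 0)
        ?_ ?_ Ih' ?_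
      · rw [h]; simp
      · exact (((continuousAt_id.sub continuousAt_const).mul continuousAt_id).mul
          (hderiv N hN1).continuousAt).continuousWithinAt
      · intro x hx
        have hx1 : 1 ≤ x := le_trans hN1 (le_of_lt hx)
        have h := (((hasDerivAt_id x).sub_const N).mul (hasDerivAt_id x)).mul (hderiv x hx1)
        exact h.congr_deriv (by simp only [id, Pi.mul_apply]; ring)
      · -- tendsto 0
        have hCt : Tendsto (fun t : ℝ => C / t^2) atTop (nhds 0) :=
          tendsto_const_nhds.div_atTop (tendsto_pow_atTop two_ne_zero)
        apply tendsto_of_tendsto_of_tendsto_of_le_of_le' (tendsto_const_nhds (x := (0:ℝ))) hCt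
        · filter_upwards [eventually_ge_atTop (max T₀ N)] with t ht
          have htN : N ≤ t := le_trans (le_max_right _ _) ht
          have ht1 : 1 ≤ t := hT₀t1 t (le_trans (le_max_left _ _) ht)
          exact mul_nonneg (mul_nonneg (by linarith) (by linarith)) (hpos t ht1).le
        · filter_upwards [eventually_ge_atTop (max T₀ N)] with t ht
          have htT : T₀ ≤ t := le_trans (le_max_left _ _) ht
          have htN : N ≤ t := le_trans (le_max_right _ _) ht
          have ht1 : 1 ≤ t := hT₀t1 t htT
          have hf0 : (0:ℝ) ≤ (t - N) * t := mul_nonneg (by linarith) (by linarith)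
          calc (t - N) * t * ψ t = ((t - N) * t) * ψ t := by ring
            _ ≤ C / t^2 := hmul t htT ((t - N) * t) hf0 (by nlinarith)
    set A : ℝ := ∫ t in Set.Ioi N, (t - N) * ψ t with hAdef
    set P : ℝ := ∫ t in Set.Ioi N, ψ t with hPdef
    have hA0 : 0 ≤ A := by
      apply setIntegral_nonneg measurableSet_Ioi
      intro t ht
      exact mul_nonneg (by linarith [(Set.mem_Ioi.1 ht).le] : (0:ℝ) ≤ t - N) (hpos t (le_trans hN1 ht.le)).le
    have hP0 : 0 ≤ P := by
      apply setIntegral_nonneg measurableSet_Ioi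
      intro t ht
      exact (hpos t (le_trans hN1 ht.le)).le
    -- ∫ (t-N) t (-ψ') = 2A + N P
    have hI4eq : ∫ t in Set.Ioi N, (t - N) * t * (-ψ' t) = 2*A + N*P := by
      have h1 : ∫ t in Set.Ioi N, (t - N) * t * (-ψ' t)
          = ∫ t in Set.Ioi N, ((2*t - N) * ψ t) := by
        have hsplit : ∫ t in Set.Ioi N, ((2*t - N) * ψ t + (t - N) * t * ψ' t)
            = (∫ t in Set.Ioi N, (2*t - N) * ψ t) + ∫ t in Set.Ioi N, (t - N) * t * ψ' t :=
          integral_add I3 I4'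
        have hneg' : ∫ t in Set.Ioi N, (t - N) * t * ψ' t
            = - ∫ t in Set.Ioi N, (t - N) * t * (-ψ' t) := by
          rw [← integral_neg]
          apply setIntegral_congr_fun measurableSet_Ioi
          intro t ht
          ring
        rw [hsplit, hneg'] at hFTC
        linarith
      have h2 : ∫ t in Set.Ioi N, ((2*t - N) * ψ t) = 2 * A + N * P := by
        have he : ∫ t in Set.Ioi N, ((2*t - N) * ψ t)
            = ∫ t in Set.Ioi N, (2 * ((t - N) * ψ t) + N * ψ t) := by
          apply setIntegral_congr_fun measurableSet_Ioi
          intro t ht; ring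
        rw [he, integral_add (I1.const_mul 2) (Iψ.const_mul N),
          integral_const_mul, integral_const_mul]
      rw [h1, h2]
    -- A ≤ 2 αn N P
    set αn : ℝ := ψ N / (N * |ψ' N|) with hαdef
    have hαn0 : 0 ≤ αn := div_nonneg (hpos N hN1).le (by positivity)
    have hαn8 : αn ≤ 1/8 := hα8 N hNT
    have hA2 : A ≤ 2 * αn * (N * P) := by
      have hAle : A ≤ αn * (2*A + N*P) := by
        rw [← hI4eq, ← integral_const_mul]
        apply setIntegral_mono_on I1 (I4.const_mul αn) measurableSet_Ioi
        intro t ht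
        have ht1 : 1 ≤ t := le_trans hN1 ht.le
        have hαt : ψ t / (t * |ψ' t|) ≤ αn := halp_anti N t hN1 ht.le
        rw [habs t ht1] at hαt
        have hd : 0 < t * (-ψ' t) := mul_pos (lt_of_lt_of_le one_pos ht1) (hψ'pos t ht1)
        have hψle : ψ t ≤ αn * (t * (-ψ' t)) := (div_le_iff₀ hd).1 hαt
        have htN : 0 ≤ t - N := by linarith [(Set.mem_Ioi.1 ht).le]
        calc (t - N) * ψ t ≤ (t - N) * (αn * (t * (-ψ' t))) :=
              mul_le_mul_of_nonneg_left hψle htN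
          _ = αn * ((t - N) * t * (-ψ' t)) := by ring
      nlinarith [mul_nonneg hαn0 (mul_nonneg hN0.le hP0)]
    -- series summability
    have hb : Summable (fun k : ℕ => C * (1/((k:ℝ)+1)^2)) := by
      have h1 : Summable (fun k : ℕ => 1/((k:ℝ))^2) :=
        Real.summable_one_div_nat_pow.2 one_lt_two
      have h2 : Summable (fun k : ℕ => 1/(((k+1:ℕ)):ℝ)^2) := (summable_nat_add_iff 1).2 h1
      have h3 : Summable (fun k : ℕ => 1/((k:ℝ)+1)^2) := by
        convert h2 using 2 with k
        push_cast; ring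
      exact h3.mul_left C
    have hSsum : Summable (fun k : ℕ => ψ ((k + n : ℕ) : ℝ)) := by
      apply Summable.of_nonneg_of_le _ _ hb
      · intro k
        rw [hScast k]
        refine (hpos _ ?_).le
        have : (0:ℝ) ≤ (k:ℝ) := Nat.cast_nonneg k
        linarith
      · intro k
        rw [hScast k]
        have hk0 : (0:ℝ) ≤ (k:ℝ) := Nat.cast_nonneg k
        have ht1 : (1:ℝ) ≤ N + k := by linarith
        have htT : T₀ ≤ N + k := by linarith
        have hk1 : (k:ℝ) + 1 ≤ N + k := by linarith
        have hψt := (hpos _ ht1).le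
        rw [mul_one_div, le_div_iff₀ (by positivity : (0:ℝ) < ((k:ℝ)+1)^2)]
        calc ψ (N+k) * ((k:ℝ)+1)^2 ≤ ψ (N+k) * (N+k)^2 :=
              mul_le_mul_of_nonneg_left (pow_le_pow_left₀ (by positivity) hk1 2) hψt
          _ ≤ ψ (N+k) * (N+k)^4 :=
              mul_le_mul_of_nonneg_left (pow_le_pow_right₀ (by linarith) (by norm_num)) hψt
          _ = (N+k)^4 * ψ (N+k) := by ring
          _ ≤ C := hdecay _ htT
    have hTsum : Summable (fun k : ℕ => ((k:ℝ)+1) * ψ ((k + 1 + n : ℕ) : ℝ)) := by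
      apply Summable.of_nonneg_of_le _ _ hb
      · intro k
        rw [hTcast k]
        refine mul_nonneg (by positivity) (hpos _ ?_).le
        have : (0:ℝ) ≤ (k:ℝ) := Nat.cast_nonneg k
        linarith
      · intro k
        rw [hTcast k]
        have hk0 : (0:ℝ) ≤ (k:ℝ) := Nat.cast_nonneg k
        have ht1 : (1:ℝ) ≤ N + k + 1 := by linarith
        have htT : T₀ ≤ N + k + 1 := by linarith
        have hk1 : (k:ℝ) + 1 ≤ N + k + 1 := by linarith
        have hψt := (hpos _ ht1).le
        rw [mul_one_div, le_div_iff₀ (by positivity : (0:ℝ) < ((k:ℝ)+1)^2)]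
        have h3 : ((k:ℝ)+1)^3 ≤ (N+k+1)^3 := pow_le_pow_left₀ (by positivity) hk1 3
        calc ((k:ℝ)+1) * ψ (N+k+1) * ((k:ℝ)+1)^2 = ψ (N+k+1) * ((k:ℝ)+1)^3 := by ring
          _ ≤ ψ (N+k+1) * (N+k+1)^3 := mul_le_mul_of_nonneg_left h3 hψt
          _ ≤ ψ (N+k+1) * (N+k+1)^4 :=
              mul_le_mul_of_nonneg_left (pow_le_pow_right₀ (by linarith) (by norm_num)) hψt
          _ = (N+k+1)^4 * ψ (N+k+1) := by ring
          _ ≤ C := hdecay _ htT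
    have hSpos : 0 < ∑' k : ℕ, ψ ((k + n : ℕ) : ℝ) := by
      apply Summable.tsum_pos hSsum _ 0
      · rw [hScast 0]
        simpa using hpos N hN1
      · intro k
        rw [hScast k]
        refine (hpos _ ?_).le
        have : (0:ℝ) ≤ (k:ℝ) := Nat.cast_nonneg k
        linarith
    -- blocks
    set ak : ℕ → ℝ := fun k => N + (k:ℝ) with hakdef
    have hak_le : ∀ k : ℕ, ak k ≤ ak (k+1) := by
      intro k; simp only [hakdef]; push_cast; linarith
    have hak_sub : ∀ k : ℕ, Set.Ioc (ak k) (ak (k+1)) ⊆ Set.Ioi N := by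
      intro k x hx
      have : N ≤ ak k := by
        simp only [hakdef]
        linarith [(Nat.cast_nonneg k : (0:ℝ) ≤ k)]
      exact lt_of_le_of_lt this hx.1
    have hak1 : ∀ k : ℕ, ak (k+1) - ak k = 1 := by
      intro k; simp only [hakdef]; push_cast; ring
    -- P ≤ S
    have hPS : P ≤ ∑' k : ℕ, ψ ((k + n : ℕ) : ℝ) := by
      have hblock : ∀ k : ℕ, IntervalIntegrable ψ volume (ak k) (ak (k+1)) := by
        intro k
        rw [intervalIntegrable_iff_integrableOn_Ioc_of_le (hak_le k)]
        exact Iψ.mono_set (hak_sub k)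
      have hpartial : ∀ K : ℕ, (∫ x in (N)..(ak K), ψ x) ≤ ∑' k : ℕ, ψ ((k + n : ℕ) : ℝ) := by
        intro K
        have hsum := intervalIntegral.sum_integral_adjacent_intervals (a := ak) (n := K)
          (fun k _ => hblock k)
        have h0 : ak 0 = N := by simp [hakdef]
        rw [h0] at hsum
        rw [← hsum]
        have hstep : ∀ k : ℕ, (∫ x in (ak k)..(ak (k+1)), ψ x) ≤ ψ ((k + n : ℕ) : ℝ) := by
          intro k
          rw [hScast k]
          have hNk1 : (1:ℝ) ≤ ak k := by
            simp only [hakdef]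
            have : (0:ℝ) ≤ (k:ℝ) := Nat.cast_nonneg k
            linarith
          have hc : (∫ x in (ak k)..(ak (k+1)), ψ (ak k)) = ψ (ak k) := by
            rw [intervalIntegral.integral_const, hak1 k]
            simp
          calc (∫ x in (ak k)..(ak (k+1)), ψ x) ≤ ∫ x in (ak k)..(ak (k+1)), ψ (ak k) := by
                apply intervalIntegral.integral_mono_on (hak_le k) (hblock k)
                  intervalIntegrable_const
                intro x hx
                exact hanti (ak k) x hNk1 hx.1
            _ = ψ (ak k) := hc
            _ = ψ (N + k) := by simp [hakdef]
        calc (∑ k ∈ Finset.range K, ∫ x in (ak k)..(ak (k+1)), ψ x)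
            ≤ ∑ k ∈ Finset.range K, ψ ((k + n : ℕ) : ℝ) :=
              Finset.sum_le_sum (fun k _ => hstep k)
          _ ≤ ∑' k : ℕ, ψ ((k + n : ℕ) : ℝ) := by
              apply hSsum.sum_le_tsum
              intro k _
              rw [hScast k]
              refine (hpos _ ?_).le
              have : (0:ℝ) ≤ (k:ℝ) := Nat.cast_nonneg k
              linarith
      have ht : Tendsto (fun K : ℕ => ∫ x in (N)..(ak K), ψ x) atTop (nhds P) := by
        apply intervalIntegral_tendsto_integral_Ioi N Iψ
        apply Filter.tendsto_atTop_add_const_left _ N tendsto_natCast_atTop_atTop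
      exact le_of_tendsto ht (Filter.Eventually.of_forall hpartial)
    -- T ≤ A + P
    have hTle : (∑' k : ℕ, ((k:ℝ)+1) * ψ ((k + 1 + n : ℕ) : ℝ)) ≤ A + P := by
      have hblock2 : ∀ k : ℕ, IntervalIntegrable (fun t => (t + 1 - N) * ψ t) volume
          (ak k) (ak (k+1)) := by
        intro k
        rw [intervalIntegrable_iff_integrableOn_Ioc_of_le (hak_le k)]
        exact I2.mono_set (hak_sub k)
      have hblockLB : ∀ k : ℕ, ((k:ℝ)+1) * ψ ((k + 1 + n : ℕ) : ℝ)
          ≤ ∫ x in (ak k)..(ak (k+1)), (x + 1 - N) * ψ x := by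
        intro k
        rw [hTcast k]
        have hc : (∫ x in (ak k)..(ak (k+1)), (((k:ℝ)+1) * ψ (N+k+1))) = ((k:ℝ)+1) * ψ (N+k+1) := by
          rw [intervalIntegral.integral_const, hak1 k]
          simp
        rw [← hc]
        apply intervalIntegral.integral_mono_on (hak_le k) intervalIntegrable_const (hblock2 k)
        intro x hx
        have hx1 : ak k ≤ x := hx.1
        have hx2 : x ≤ ak (k+1) := hx.2
        have hk0 : (0:ℝ) ≤ (k:ℝ) := Nat.cast_nonneg k
        have hxk : N + k ≤ x := by simpa [hakdef] using hx1
        have hxk2 : x ≤ N + k + 1 := by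
          have : ak (k+1) = N + k + 1 := by simp only [hakdef]; push_cast; ring
          linarith [hx2, this ▸ hx2]
        have hxx1 : (1:ℝ) ≤ x := by linarith
        apply mul_le_mul (by linarith) (hanti x (N+k+1) hxx1 hxk2)
          (hpos _ (by linarith)).le (by linarith)
      apply hTsum.tsum_le_of_sum_le
      intro s
      obtain ⟨K, hK⟩ := s.exists_nat_subset_range
      have hterm0 : ∀ i : ℕ, 0 ≤ ((i:ℝ)+1) * ψ ((i + 1 + n : ℕ) : ℝ) := by
        intro i
        rw [hTcast i]
        refine mul_nonneg (by positivity) (hpos _ ?_).le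
        have : (0:ℝ) ≤ (i:ℝ) := Nat.cast_nonneg i
        linarith
      have hsum := intervalIntegral.sum_integral_adjacent_intervals (a := ak) (n := K)
        (fun k _ => hblock2 k)
      have h0 : ak 0 = N := by simp [hakdef]
      rw [h0] at hsum
      calc (∑ i ∈ s, ((i:ℝ)+1) * ψ ((i + 1 + n : ℕ) : ℝ))
          ≤ ∑ i ∈ Finset.range K, ((i:ℝ)+1) * ψ ((i + 1 + n : ℕ) : ℝ) :=
            Finset.sum_le_sum_of_subset_of_nonneg hK (fun i _ _ => hterm0 i)
        _ ≤ ∑ k ∈ Finset.range K, ∫ x in (ak k)..(ak (k+1)), (x + 1 - N) * ψ x :=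
            Finset.sum_le_sum (fun k _ => hblockLB k)
        _ = ∫ x in (N)..(ak K), (x + 1 - N) * ψ x := hsum
        _ ≤ ∫ x in Set.Ioi N, (x + 1 - N) * ψ x := by
            rw [intervalIntegral.integral_of_le (by
              simp only [hakdef]
              linarith [(Nat.cast_nonneg K : (0:ℝ) ≤ K)])]
            apply setIntegral_mono_set I2
            · filter_upwards [ae_restrict_mem measurableSet_Ioi] with t ht
              have ht1 : (1:ℝ) ≤ t := le_trans hN1 ht.le
              exact mul_nonneg (by linarith [(Set.mem_Ioi.1 ht).le]) (hpos t ht1).le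
            · exact HasSubset.Subset.eventuallyLE Set.Ioc_subset_Ioi_self
        _ = A + P := by
            have he : ∫ x in Set.Ioi N, (x + 1 - N) * ψ x
                = ∫ x in Set.Ioi N, ((x - N) * ψ x + ψ x) := by
              apply setIntegral_congr_fun measurableSet_Ioi
              intro t ht; ring
            rw [he, integral_add I1 Iψ]
    -- assemble
    refine ⟨hSpos, ?_⟩
    set S : ℝ := ∑' k : ℕ, ψ ((k + n : ℕ) : ℝ) with hSdef
    set T : ℝ := ∑' k : ℕ, ((k:ℝ)+1) * ψ ((k + 1 + n : ℕ) : ℝ) with hTdef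
    have h2αN : (0:ℝ) ≤ 2 * αn * N := mul_nonneg (mul_nonneg (by norm_num) hαn0) hN0.le
    have h5 : T ≤ (2*αn*N + 1) * S := by
      have hmono := mul_le_mul_of_nonneg_left hPS h2αN
      nlinarith
    have h6 := mul_le_mul_of_nonneg_left h5 (show (0:ℝ) ≤ 1/N by positivity)
    calc (1/N) * T ≤ (1/N) * ((2*αn*N + 1) * S) := h6
      _ = (2 * αn + 1/N) * S := by
          field_simp
          try ring
  -- ### final squeeze
  obtain ⟨N₀, hN₀⟩ := exists_nat_ge (T₀ + 1)
  have hupper : Tendsto (fun n : ℕ => 2 * (ψ (n:ℝ) / ((n:ℝ) * |ψ' (n:ℝ)|)) + 1/(n:ℝ))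
      atTop (nhds 0) := by
    have h1 : Tendsto (fun n : ℕ => ψ (n:ℝ) / ((n:ℝ) * |ψ' (n:ℝ)|)) atTop (nhds 0) :=
      halp_lim.comp tendsto_natCast_atTop_atTop
    have h2 := (h1.const_mul 2).add tendsto_one_div_atTop_nhds_zero_nat
    simpa using h2
  apply tendsto_of_tendsto_of_tendsto_of_le_of_le' (tendsto_const_nhds (x := (0:ℝ))) hupper
  · filter_upwards [eventually_ge_atTop N₀] with n hn
    have hc : T₀ + 1 ≤ (n:ℝ) := le_trans hN₀ (Nat.cast_le.2 hn)
    obtain ⟨hSpos, _⟩ := key n hc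
    apply div_nonneg _ hSpos.le
    apply mul_nonneg (by positivity)
    apply tsum_nonneg
    intro k
    refine mul_nonneg (by positivity) (hpos _ ?_).le
    have h1 : (1:ℝ) ≤ (n:ℝ) := by linarith [hT₀1]
    have : ((k + 1 + n : ℕ) : ℝ) = (k:ℝ) + 1 + (n:ℝ) := by push_cast; ring
    rw [this]
    have : (0:ℝ) ≤ (k:ℝ) := Nat.cast_nonneg k
    linarith
  · filter_upwards [eventually_ge_atTop N₀] with n hn
    have hc : T₀ + 1 ≤ (n:ℝ) := le_trans hN₀ (Nat.cast_le.2 hn)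
    obtain ⟨hSpos, hineq⟩ := key n hc
    rw [div_le_iff₀ hSpos]
    exact hineq
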